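/- For n ≥ 7 and any integer x with 4 ≤ x ≤ n-3 such that (n-4)·x is even, the sequence d - 2 = (n-3, n-3, x-2, x-2, …, x-2) of length n-2 (with n-4 copies of x-2) is graphic. -/

import Mathlib

private lemma exists_reg (m k : ℕ) [NeZero m] (h3 : 3 ≤ m) (hk : k < m) (hpar : Even (m * k)) :
    ∃ (H : SimpleGraph (ZMod m)) (HD : DecidableRel H.Adj),
      ∀ v, (@SimpleGraph.neighborFinset _ H v
        (@SimpleGraph.neighborSetFintype _ H _ HD v)).card = k := by
  set S : ℕ → Prop := fun t => t ≠ 0 ∧ (t ≤ k / 2 ∨ m - k / 2 ≤ t ∨ (k % 2 = 1 ∧ 2 * t = m))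
    with hSdef
  haveI : DecidablePred S := fun t => by
    rw [hSdef]; infer_instance
  have hme : k % 2 = 1 → m % 2 = 0 := by
    intro hk1
    rcases Nat.even_mul.mp hpar with h | h
    · rw [Nat.even_iff] at h; omega
    · rw [Nat.even_iff] at h; omega
  have hsymm : ∀ t, 0 < t → t < m → S t → S (m - t) := by
    intro t h1 h2 hs
    rw [hSdef] at hs ⊢
    omega
  set H : SimpleGraph (ZMod m) := SimpleGraph.fromRel (fun u v => S (u - v).val) with hHdef
  haveI HD : DecidableRel H.Adj := fun a b => by
    rw [hHdef]; exact inferInstanceAs (Decidable (_ ∧ _))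
  have hadj : ∀ u w : ZMod m, H.Adj u w ↔ S ((w - u).val) := by
    intro u w
    rw [hHdef, SimpleGraph.fromRel_adj]
    constructor
    · rintro ⟨hne, h | h⟩
      · have hne0 : u - w ≠ 0 := sub_ne_zero.mpr hne
        have hv0 : (u - w).val ≠ 0 := fun e => hne0 ((ZMod.val_eq_zero _).mp e)
        have : w - u = -(u - w) := by ring
        rw [this, ZMod.neg_val, if_neg hne0]
        exact hsymm _ (by omega) ((u - w).val_lt) h
      · exact h
    · intro h
      have hne0 : w - u ≠ 0 := by
        intro e; rw [e] at h
        exact h.1 (by simp)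
      refine ⟨(sub_ne_zero.mp hne0).symm, Or.inr h⟩
  refine ⟨H, HD, fun v => ?_⟩
  have h1 : H.neighborFinset v = Finset.univ.filter (fun w => S ((w - v).val)) := by
    ext w
    simp [SimpleGraph.mem_neighborFinset, hadj]
  rw [h1]
  have h2 : (Finset.univ.filter (fun w : ZMod m => S ((w - v).val))).card
      = (Finset.univ.filter (fun z : ZMod m => S z.val)).card := by
    apply Finset.card_nbij' (fun w => w - v) (fun z => z + v)
    · intro a ha; simp_all
    · intro a ha; simp_all
    · intro a _; ring
    · intro a _; ring
  rw [h2]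
  have h3' : (Finset.univ.filter (fun z : ZMod m => S z.val)).card
      = ((Finset.range m).filter S).card := by
    refine Finset.card_nbij' (fun z : ZMod m => z.val) (fun t => (t : ZMod m)) ?_ ?_ ?_ ?_
    · intro a ha
      simp only [Finset.mem_coe, Finset.mem_filter, Finset.mem_range, Finset.mem_univ, true_and] at ha ⊢
      exact ⟨a.val_lt, ha⟩
    · intro t ht
      simp only [Finset.mem_coe, Finset.mem_filter, Finset.mem_range, Finset.mem_univ, true_and] at ht ⊢
      rw [ZMod.val_cast_of_lt ht.1]
      exact ht.2
    · intro a _; exact ZMod.natCast_rightInverse a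
    · intro t ht
      simp only [Finset.mem_coe, Finset.mem_filter, Finset.mem_range] at ht
      exact ZMod.val_cast_of_lt ht.1
  rw [h3']
  rcases Nat.even_or_odd k with hke | hko
  · have hk2 : k % 2 = 0 := Nat.even_iff.mp hke
    have : (Finset.range m).filter S = Finset.Icc 1 (k / 2) ∪ Finset.Icc (m - k / 2) (m - 1) := by
      ext t
      simp only [Finset.mem_filter, Finset.mem_range, Finset.mem_union, Finset.mem_Icc, hSdef]
      omega
    rw [this, Finset.card_union_of_disjoint, Nat.card_Icc, Nat.card_Icc]
    · omega
    · rw [Finset.disjoint_left]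
      intro a ha hb
      simp only [Finset.mem_Icc] at ha hb
      omega
  · have hk2 : k % 2 = 1 := Nat.odd_iff.mp hko
    have hm2 : m % 2 = 0 := hme hk2
    have : (Finset.range m).filter S
        = (Finset.Icc 1 (k / 2) ∪ Finset.Icc (m - k / 2) (m - 1)) ∪ {m / 2} := by
      ext t
      simp only [Finset.mem_filter, Finset.mem_range, Finset.mem_union, Finset.mem_Icc,
        Finset.mem_singleton, hSdef]
      omega
    rw [this, Finset.card_union_of_disjoint, Finset.card_union_of_disjoint,
      Nat.card_Icc, Nat.card_Icc, Finset.card_singleton]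
    · omega
    · rw [Finset.disjoint_left]
      intro a ha hb
      simp only [Finset.mem_Icc] at ha hb
      omega
    · rw [Finset.disjoint_left]
      intro a ha hb
      simp only [Finset.mem_union, Finset.mem_Icc, Finset.mem_singleton] at ha hb
      omega

private lemma exists_joined (N m k : ℕ) (hN : N = 2 + m) (h3 : 3 ≤ m) (hk : k < m)
    (hpar : Even (m * k)) :
    ∃ (G : SimpleGraph (Fin N)) (_ : DecidableRel G.Adj),
      (∀ i : Fin N, i.val < 2 → G.degree i = m + 1) ∧
      (∀ i : Fin N, 2 ≤ i.val → G.degree i = k + 2) := by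
  subst hN
  haveI : NeZero m := ⟨by omega⟩
  obtain ⟨H, HD, Hreg⟩ := exists_reg m k h3 hk hpar
  letI := HD
  set f : Fin (2 + m) → ZMod m := fun i => ((i.val - 2 : ℕ) : ZMod m) with hfdef
  set G : SimpleGraph (Fin (2 + m)) :=
    SimpleGraph.fromRel (fun i j => i.val < 2 ∨ j.val < 2 ∨ H.Adj (f i) (f j)) with hGdef
  haveI GD : DecidableRel G.Adj := fun a b => by
    rw [hGdef]; exact inferInstanceAs (Decidable (_ ∧ _))
  have hf : ∀ j : Fin (2 + m), 2 ≤ j.val → (f j).val = j.val - 2 := by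
    intro j hj
    exact ZMod.val_cast_of_lt (by omega)
  have hGadj : ∀ i j, G.Adj i j ↔ i ≠ j ∧ (i.val < 2 ∨ j.val < 2 ∨ H.Adj (f i) (f j)) := by
    intro i j
    rw [hGdef, SimpleGraph.fromRel_adj]
    constructor
    · rintro ⟨h1, h2 | h2⟩
      · exact ⟨h1, h2⟩
      · refine ⟨h1, ?_⟩
        rcases h2 with h | h | h
        · exact Or.inr (Or.inl h)
        · exact Or.inl h
        · exact Or.inr (Or.inr h.symm)
    · rintro ⟨h1, h2⟩
      exact ⟨h1, Or.inl h2⟩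
  refine ⟨G, GD, fun i hi => ?_, fun i hi => ?_⟩
  · -- hub
    have hnb : G.neighborFinset i = Finset.univ.erase i := by
      ext j
      simp only [SimpleGraph.mem_neighborFinset, hGadj, Finset.mem_erase, Finset.mem_univ,
        and_true]
      constructor
      · rintro ⟨h, _⟩; exact h.symm
      · intro h; exact ⟨h.symm, Or.inl hi⟩
    rw [show G.degree i = (G.neighborFinset i).card from rfl, hnb,
      Finset.card_erase_of_mem (Finset.mem_univ i),
      Finset.card_univ, Fintype.card_fin]
    omega
  · -- tail
    have hGadj' : ∀ j, G.Adj i j ↔ (j.val < 2 ∨ (2 ≤ j.val ∧ H.Adj (f i) (f j))) := by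
      intro j
      rw [hGadj]
      constructor
      · rintro ⟨hne, h | h | h⟩
        · omega
        · exact Or.inl h
        · by_cases h2 : 2 ≤ j.val
          · exact Or.inr ⟨h2, h⟩
          · exact Or.inl (by omega)
      · rintro (h | ⟨h1, h2⟩)
        · refine ⟨?_, Or.inr (Or.inl h)⟩
          intro e; rw [e] at hi; omega
        · refine ⟨?_, Or.inr (Or.inr h2)⟩
          intro e
          exact h2.ne (by rw [e])
    have hnb : G.neighborFinset i
        = Finset.univ.filter (fun j : Fin (2 + m) => j.val < 2)
          ∪ Finset.univ.filter (fun j => 2 ≤ j.val ∧ H.Adj (f i) (f j)) := by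
      ext j
      simp only [SimpleGraph.mem_neighborFinset, hGadj', Finset.mem_union, Finset.mem_filter,
        Finset.mem_univ, true_and]
    have hdisj : Disjoint (Finset.univ.filter (fun j : Fin (2 + m) => j.val < 2))
        (Finset.univ.filter (fun j => 2 ≤ j.val ∧ H.Adj (f i) (f j))) := by
      rw [Finset.disjoint_left]
      intro a ha hb
      simp only [Finset.mem_filter] at ha hb
      omega
    have hcard1 : (Finset.univ.filter (fun j : Fin (2 + m) => j.val < 2)).card = 2 := by
      have : Finset.univ.filter (fun j : Fin (2 + m) => j.val < 2)
          = {(⟨0, by omega⟩ : Fin (2 + m)), ⟨1, by omega⟩} := by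
        ext j
        simp only [Finset.mem_filter, Finset.mem_univ, true_and, Finset.mem_insert,
          Finset.mem_singleton, Fin.ext_iff]
        omega
      rw [this]
      rw [Finset.card_insert_of_notMem (by simp [Fin.ext_iff]), Finset.card_singleton]
    have hcard2 : (Finset.univ.filter
        (fun j : Fin (2 + m) => 2 ≤ j.val ∧ H.Adj (f i) (f j))).card = k := by
      have : (Finset.univ.filter
          (fun j : Fin (2 + m) => 2 ≤ j.val ∧ H.Adj (f i) (f j))).card
          = (H.neighborFinset (f i)).card := by
        apply Finset.card_nbij' (fun j => f j)
          (fun z => (⟨z.val + 2, by have := z.val_lt; omega⟩ : Fin (2 + m)))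
        · intro a ha
          simp only [Finset.mem_coe, Finset.mem_filter] at ha
          rw [Finset.mem_coe, SimpleGraph.mem_neighborFinset]
          exact ha.2.2
        · intro z hz
          rw [Finset.mem_coe, SimpleGraph.mem_neighborFinset] at hz
          simp only [Finset.mem_coe, Finset.mem_filter, Finset.mem_univ, true_and]
          refine ⟨by omega, ?_⟩
          have : f ⟨z.val + 2, by have := z.val_lt; omega⟩ = z := by
            rw [hfdef]
            simp only [Nat.add_sub_cancel]
            exact ZMod.natCast_rightInverse z
          rw [this]
          exact hz
        · intro a ha
          simp only [Finset.mem_coe, Finset.mem_filter] at ha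
          apply Fin.ext
          simp only []
          rw [hf a ha.2.1]
          omega
        · intro z _
          rw [hfdef]
          simp only [Nat.add_sub_cancel]
          exact ZMod.natCast_rightInverse z
      rw [this]
      exact Hreg (f i)
    rw [show G.degree i = (G.neighborFinset i).card from rfl, hnb,
      Finset.card_union_of_disjoint hdisj, hcard1, hcard2]
    omega

/-- A finite list of naturals is graphic if it is realized as the degree sequence of a
simple graph. -/
def IsGraphicList (l : List ℕ) : Prop :=
  ∃ (G : SimpleGraph (Fin l.length)) (_ : DecidableRel G.Adj), ∀ i, G.degree i = l.get i

/-- For `n ≥ 7` and `4 ≤ x ≤ n-3` with `(n-4)·x` even, the sequence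
`(n-3, n-3, x-2, …, x-2)` of length `n-2` (with `n-4` copies of `x-2`) is graphic. -/
theorem seq_k2_minus_graphic {n x : ℕ} (hn : 7 ≤ n) (hx4 : 4 ≤ x) (hxn : x ≤ n - 3)
    (hpar : Even ((n - 4) * x)) :
    IsGraphicList ([n - 3, n - 3] ++ List.replicate (n - 4) (x - 2)) := by
  set m := n - 4 with hm
  set k := x - 4 with hk'
  have hlen : ([n - 3, n - 3] ++ List.replicate (n - 4) (x - 2)).length = 2 + m := by
    simp; omega
  have h3 : 3 ≤ m := by omega
  have hkm : k < m := by omega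
  have hx : x = k + 4 := by omega
  have hpar' : Even (m * k) := by
    rcases Nat.even_mul.mp hpar with h | h
    · exact Nat.even_mul.mpr (Or.inl h)
    · refine Nat.even_mul.mpr (Or.inr ?_)
      rw [Nat.even_iff] at h ⊢
      omega
  obtain ⟨G, GD, hhub, htail⟩ := exists_joined _ m k hlen h3 hkm hpar'
  refine ⟨G, GD, fun i => ?_⟩
  have hil := i.isLt
  rw [List.get_eq_getElem]
  by_cases h2 : (i : ℕ) < 2
  · rw [hhub i h2]
    have h01 : (↑i : ℕ) = 0 ∨ (↑i : ℕ) = 1 := by omega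
    rcases h01 with h | h <;> simp only [h] <;> simp <;> omega
  · rw [htail i (by omega)]
    rw [List.getElem_append_right (by simp; omega)]
    simp only [List.length_cons, List.length_nil, List.getElem_replicate]
    omega
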